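/- The eigenvalues of the N×N matrix A (tridiagonal with diagonal (1,2,...,2,1) and off-diagonals -1) are exactly a_N^i = 2(1 - cos((i-1)π/N)) for i = 1,...,N, each with multiplicity one; equivalently, det(A - a·I) = (-1)^N ∏_{i=1}^N (a - 2(1 - cos((i-1)π/N))). -/

import Mathlib

open Real Matrix Finset

noncomputable def chainA (N : ℕ) : Matrix (Fin N) (Fin N) ℝ :=
  Matrix.of fun i j =>
    if (i : ℕ) = (j : ℕ) then (if (i : ℕ) = 0 ∨ (i : ℕ) = N - 1 then 1 else 2)
    else if (i : ℕ) + 1 = (j : ℕ) ∨ (j : ℕ) + 1 = (i : ℕ) then -1 else 0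

open Polynomial

/-- tridiagonal matrix with diagonal `d` (as function of index) and off-diagonals -1 -/
noncomputable def triM (n : ℕ) (d : ℕ → ℝ) : Matrix (Fin n) (Fin n) ℝ :=
  Matrix.of fun i j =>
    if (i : ℕ) = (j : ℕ) then d i
    else if (i : ℕ) + 1 = (j : ℕ) ∨ (j : ℕ) + 1 = (i : ℕ) then -1 else 0

lemma triM_congr (n : ℕ) {d d' : ℕ → ℝ} (h : ∀ i < n, d i = d' i) : triM n d = triM n d' := by
  ext i j
  simp only [triM, Matrix.of_apply]
  split_ifs with h1
  · exact h i i.isLt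
  · rfl
  · rfl

lemma det_triM_zero (d : ℕ → ℝ) : (triM 0 d).det = 1 := Matrix.det_isEmpty

lemma det_triM_one (d : ℕ → ℝ) : (triM 1 d).det = d 0 := by
  rw [Matrix.det_fin_one]; simp [triM]

lemma det_triM_rec (n : ℕ) (d : ℕ → ℝ) :
    (triM (n + 2) d).det =
      d 0 * (triM (n + 1) (fun i => d (i + 1))).det - (triM n (fun i => d (i + 2))).det := by
  rw [show (n+2) = (n+1)+1 from rfl] at *
  rw [Matrix.det_succ_row_zero]
  rw [Fin.sum_univ_succ, Fin.sum_univ_succ]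
  have h0 : (triM (n+1+1) d) 0 0 = d 0 := by simp [triM]
  have h1 : (triM (n+1+1) d) 0 (Fin.succ 0) = -1 := by
    simp [triM, Fin.succ]
  have hz : ∀ j : Fin n, (triM (n+1+1) d) 0 j.succ.succ = 0 := by
    intro j
    simp only [triM, Matrix.of_apply, Fin.val_zero, Fin.val_succ]
    split_ifs <;> simp_all
  rw [h0, h1]
  simp only [fun j : Fin n => hz j, mul_zero, zero_mul, Finset.sum_const_zero, add_zero]
  have hA : (triM (n+1+1) d).submatrix Fin.succ (Fin.succAbove 0) =
      triM (n + 1) (fun i => d (i + 1)) := by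
    ext i j
    simp only [Fin.succAbove_zero, Matrix.submatrix_apply, triM, Matrix.of_apply, Fin.val_succ]
    by_cases h : (i : ℕ) = (j : ℕ)
    · rw [if_pos (by omega), if_pos h]
    · rw [if_neg (by omega), if_neg h]
      by_cases h2 : (i : ℕ) + 1 = (j : ℕ) ∨ (j : ℕ) + 1 = (i : ℕ)
      · rw [if_pos (by omega), if_pos h2]
      · rw [if_neg (by omega), if_neg h2]
  have hB : ((triM (n+1+1) d).submatrix Fin.succ (Fin.succ 0).succAbove).det =
      - (triM n (fun i => d (i + 2))).det := by
    rw [Matrix.det_succ_column_zero, Fin.sum_univ_succ]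
    have hB0 : (triM (n+1+1) d).submatrix Fin.succ (Fin.succ 0).succAbove 0 0 = -1 := by
      simp only [Matrix.submatrix_apply]
      rw [show (Fin.succ 0 : Fin (n+1+1)) = 1 from rfl, Fin.one_succAbove_zero]
      simp [triM]
    have hBz : ∀ i : Fin n,
        (triM (n+1+1) d).submatrix Fin.succ (Fin.succ 0).succAbove i.succ 0 = 0 := by
      intro i
      simp only [Matrix.submatrix_apply]
      rw [show (Fin.succ 0 : Fin (n+1+1)) = 1 from rfl, Fin.one_succAbove_zero]
      simp only [triM, Matrix.of_apply, Fin.val_succ, Fin.val_zero]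
      split_ifs <;> simp_all
    rw [hB0]
    simp only [fun i : Fin n => hBz i, mul_zero, zero_mul, Finset.sum_const_zero, add_zero]
    have hC : ((triM (n+1+1) d).submatrix Fin.succ (Fin.succ 0).succAbove).submatrix
        (Fin.succAbove 0) Fin.succ = triM n (fun i => d (i + 2)) := by
      ext i j
      simp only [Fin.succAbove_zero, Matrix.submatrix_apply]
      rw [show (Fin.succ 0 : Fin (n+1+1)) = 1 from rfl, Fin.one_succAbove_succ]
      simp only [triM, Matrix.of_apply, Fin.val_succ]
      by_cases h : (i : ℕ) = (j : ℕ)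
      · rw [if_pos (by omega), if_pos h]
      · rw [if_neg (by omega), if_neg h]
        by_cases h2 : (i : ℕ) + 1 = (j : ℕ) ∨ (j : ℕ) + 1 = (i : ℕ)
        · rw [if_pos (by omega), if_pos h2]
        · rw [if_neg (by omega), if_neg h2]
    rw [hC]
    norm_num
  rw [hA, hB]
  simp
  ring

noncomputable def qp : ℕ → Polynomial ℝ
  | 0 => 1
  | 1 => 1 - Polynomial.X
  | (n+2) => (2 - Polynomial.X) * qp (n+1) - qp n

lemma gdet (a : ℝ) : ∀ n, (triM n (fun i => if i = n - 1 then 1-a else 2-a)).det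
    = (qp n).eval a := by
  intro n
  induction n using Nat.strong_induction_on with
  | _ n ih =>
    match n with
    | 0 => simp [qp, det_triM_zero]
    | 1 => rw [det_triM_one]; simp [qp]
    | (m+2) =>
      rw [det_triM_rec]
      rw [triM_congr (m+1) (d' := fun i => if i = (m+1) - 1 then 1-a else 2-a)
        (by intro i hi
            by_cases h : i + 1 = m + 2 - 1
            · rw [if_pos h, if_pos (by omega)]
            · rw [if_neg h, if_neg (by omega)])]
      rw [triM_congr m (d' := fun i => if i = m - 1 then 1-a else 2-a)
        (by intro i hi
            by_cases h : i + 2 = m + 2 - 1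
            · rw [if_pos h, if_pos (by omega)]
            · rw [if_neg h, if_neg (by omega)])]
      rw [ih (m+1) (by omega), ih m (by omega)]
      rw [if_neg (by omega : ¬ (0 : ℕ) = m + 2 - 1),
        show qp (m+2) = (2 - Polynomial.X) * qp (m+1) - qp m from rfl]
      simp [Polynomial.eval_mul]

lemma chainA_sub (N : ℕ) (a : ℝ) :
    chainA N - a • (1 : Matrix (Fin N) (Fin N) ℝ) =
      triM N (fun i => (if i = 0 ∨ i = N - 1 then 1 else 2) - a) := by
  ext i j
  simp only [chainA, triM, Matrix.sub_apply, Matrix.smul_apply, Matrix.one_apply,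
    Matrix.of_apply, smul_eq_mul]
  by_cases h : (i : ℕ) = (j : ℕ)
  · have hij : i = j := Fin.ext h
    subst hij
    rw [if_pos rfl, if_pos rfl, if_pos rfl, mul_one]
  · rw [if_neg h, if_neg h, if_neg (fun hh => h (congrArg Fin.val hh)), mul_zero, sub_zero]

lemma det_chain (m : ℕ) (a : ℝ) :
    (chainA (m+2) - a • (1 : Matrix (Fin (m+2)) (Fin (m+2)) ℝ)).det =
      ((1 - Polynomial.X) * qp (m+1) - qp m).eval a := by
  rw [chainA_sub, det_triM_rec]
  rw [triM_congr (m+1) (d' := fun i => if i = (m+1) - 1 then 1-a else 2-a)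
    (by intro i hi
        by_cases h : i = m
        · rw [if_pos (by omega : i + 1 = 0 ∨ i + 1 = m + 2 - 1), if_pos (by omega)]
        · rw [if_neg (by omega : ¬(i + 1 = 0 ∨ i + 1 = m + 2 - 1)), if_neg (by omega)])]
  rw [triM_congr m (d' := fun i => if i = m - 1 then 1-a else 2-a)
    (by intro i hi
        by_cases h : i + 2 = m + 2 - 1
        · rw [if_pos (by omega : i + 2 = 0 ∨ i + 2 = m + 2 - 1), if_pos (by omega)]
        · rw [if_neg (by omega : ¬(i + 2 = 0 ∨ i + 2 = m + 2 - 1)), if_neg (by omega)])]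
  rw [gdet, gdet, if_pos (Or.inl rfl)]
  simp [Polynomial.eval_mul]

open Polynomial in
lemma qp_deg_coeff : ∀ n, (qp n).natDegree ≤ n ∧ (qp n).coeff n = (-1)^n := by
  intro n
  induction n using Nat.strong_induction_on with
  | _ n ih =>
    match n with
    | 0 => constructor
           · simp [qp]
           · simp [qp]
    | 1 => constructor
           · exact le_trans (natDegree_sub_le _ _) (by simp)
           · simp [qp, coeff_one]
    | (m+2) =>
      obtain ⟨hd1, hc1⟩ := ih (m+1) (by omega)
      obtain ⟨hd0, hc0⟩ := ih m (by omega)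
      have h2C : (2 : ℝ[X]) = C 2 := (map_ofNat C 2).symm
      constructor
      · rw [show qp (m+2) = (2 - X) * qp (m+1) - qp m from rfl]
        refine le_trans (natDegree_sub_le _ _) (max_le ?_ (by omega))
        refine le_trans (natDegree_mul_le) ?_
        have : (2 - X : ℝ[X]).natDegree ≤ 1 := le_trans (natDegree_sub_le _ _) (by simp)
        omega
      · rw [show qp (m+2) = (2 - X) * qp (m+1) - qp m from rfl]
        rw [coeff_sub, sub_mul, coeff_sub, h2C, coeff_C_mul,
          show m + 2 = (m+1) + 1 from rfl, coeff_X_mul, hc1,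
          coeff_eq_zero_of_natDegree_lt (lt_of_le_of_lt hd1 (by omega)),
          coeff_eq_zero_of_natDegree_lt (lt_of_le_of_lt hd0 (by omega))]
        ring

open Polynomial in
lemma qp_eval_zero : ∀ n, (qp n).eval 0 = 1 := by
  intro n
  induction n using Nat.strong_induction_on with
  | _ n ih =>
    match n with
    | 0 => simp [qp]
    | 1 => simp [qp]
    | (m+2) =>
      rw [show qp (m+2) = (2 - X) * qp (m+1) - qp m from rfl]
      simp [ih (m+1) (by omega), ih m (by omega)]
      norm_num

lemma two_cos_sin (θ x : ℝ) : 2 * Real.cos θ * Real.sin x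
    = Real.sin (x + θ) + Real.sin (x - θ) := by
  rw [Real.sin_add, Real.sin_sub]; ring

open Polynomial in
lemma qp_trig (θ : ℝ) : ∀ n, (qp n).eval (2 - 2 * Real.cos θ) * Real.sin θ
    = Real.sin ((n+1) * θ) - Real.sin (n * θ) := by
  intro n
  induction n using Nat.strong_induction_on with
  | _ n ih =>
    match n with
    | 0 => simp [qp]
    | 1 =>
      rw [show qp 1 = 1 - X from rfl]
      simp only [eval_sub, eval_one, eval_X]
      push_cast
      rw [show ((1:ℝ)+1) * θ = 2*θ by ring, Real.sin_two_mul]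
      ring
    | (m+2) =>
      rw [show qp (m+2) = (2 - X) * qp (m+1) - qp m from rfl]
      have e1 := ih (m+1) (by omega)
      have e0 := ih m (by omega)
      have key : 2 * Real.cos θ * Real.sin (((m+1:ℕ)+1 : ℝ) * θ)
          = Real.sin (((m+2:ℕ)+1 : ℝ) * θ) + Real.sin (((m+1:ℕ) : ℝ) * θ) := by
        rw [two_cos_sin]
        push_cast
        ring_nf
      have key2 : 2 * Real.cos θ * Real.sin (((m:ℕ)+1 : ℝ) * θ)
          = Real.sin (((m+1:ℕ)+1 : ℝ) * θ) + Real.sin (((m:ℕ) : ℝ) * θ) := by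
        rw [two_cos_sin]
        push_cast
        ring_nf
      simp only [eval_sub, eval_mul, eval_X, eval_ofNat]
      push_cast at e1 e0 key key2 ⊢
      rw [show ((m:ℝ) + 1 + 1) = ((m:ℝ) + 2) from by ring] at e1 key key2
      linear_combination (2*Real.cos θ) * e1 - e0 + key - key2

open Polynomial in
lemma qp_poly_eq (m : ℕ) :
    (1 - X) * qp (m+1) - qp m =
      C ((-1:ℝ)^(m+2)) * ∏ k ∈ Finset.range (m+2),
        (X - C (2 * (1 - Real.cos (k * Real.pi / (m+2))))) := by
  set N : ℕ := m + 2 with hNdef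
  set lam : ℕ → ℝ := fun k => 2 * (1 - Real.cos (k * Real.pi / N)) with hlam
  set r : ℝ[X] := ∏ k ∈ Finset.range N, (X - C (lam k)) with hr
  set P : ℝ[X] := (1 - X) * qp (m+1) - qp m with hP
  have hrmono : r.Monic := monic_prod_of_monic _ _ fun k _ => monic_X_sub_C _
  have hdegr : r.natDegree = N := by
    rw [hr, natDegree_prod_of_monic _ _ fun k _ => monic_X_sub_C _]
    simp [natDegree_X_sub_C]
  obtain ⟨hd1, hc1⟩ := qp_deg_coeff (m+1)
  obtain ⟨hd0, hc0⟩ := qp_deg_coeff m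
  have hPdeg : P.natDegree ≤ N := by
    refine le_trans (natDegree_sub_le _ _) (max_le ?_ (by omega))
    refine le_trans natDegree_mul_le ?_
    have : (1 - X : ℝ[X]).natDegree ≤ 1 := le_trans (natDegree_sub_le _ _) (by simp)
    omega
  have hPcoeff : P.coeff N = (-1:ℝ)^N := by
    rw [hP, coeff_sub, sub_mul, one_mul, coeff_sub,
      show N = (m+1) + 1 from rfl, coeff_X_mul, hc1,
      coeff_eq_zero_of_natDegree_lt (lt_of_le_of_lt hd1 (by omega)),
      coeff_eq_zero_of_natDegree_lt (lt_of_le_of_lt hd0 (by omega))]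
    ring
  set Q : ℝ[X] := P - C ((-1:ℝ)^N) * r with hQ
  have hQdeg : Q.natDegree ≤ N :=
    le_trans (natDegree_sub_le _ _)
      (max_le hPdeg (le_trans (natDegree_C_mul_le _ _) (le_of_eq hdegr)))
  have hQcoeff : Q.coeff N = 0 := by
    rw [hQ, coeff_sub, coeff_C_mul, hPcoeff, ← hdegr, hrmono.coeff_natDegree]
    ring
  have hQlt : Q.natDegree < N := by
    rcases eq_or_ne Q 0 with h | h
    · rw [h]; simpa using Nat.pos_of_ne_zero (by omega)
    · refine lt_of_le_of_ne hQdeg fun hEq => h (leadingCoeff_eq_zero.mp ?_)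
      rw [leadingCoeff, hEq, hQcoeff]
  have hPeval : ∀ k < N, P.eval (lam k) = 0 := by
    intro k hk
    rcases Nat.eq_zero_or_pos k with rfl | hk1
    · have : lam 0 = 0 := by simp [hlam]
      rw [this, hP]
      simp [qp_eval_zero]
    · set θ : ℝ := k * Real.pi / N with hθ
      have hNpos : (0:ℝ) < N := by positivity
      have hθpos : 0 < θ := by
        rw [hθ]
        have : (0:ℝ) < k := by exact_mod_cast hk1
        positivity
      have hθlt : θ < Real.pi := by
        rw [hθ, div_lt_iff₀ hNpos]
        have hkN : (k:ℝ) < N := by exact_mod_cast hk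
        nlinarith [Real.pi_pos]
      have hsin : Real.sin θ ≠ 0 := ne_of_gt (Real.sin_pos_of_pos_of_lt_pi hθpos hθlt)
      have hlamθ : lam k = 2 - 2 * Real.cos θ := by rw [hlam]; ring
      have hNθ : Real.sin (((m+1:ℕ) + 1 : ℝ) * θ) = 0 := by
        have : ((m+1:ℕ) + 1 : ℝ) * θ = k * Real.pi := by
          rw [hθ]
          field_simp
          push_cast [hNdef]
          ring
        rw [this]
        exact Real.sin_nat_mul_pi k
      have e1 := qp_trig θ (m+1)
      have e0 := qp_trig θ m
      have key2 := two_cos_sin θ (((m:ℕ)+1) * θ)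
      have harg1 : ((m:ℝ)+1) * θ + θ = ((m+1:ℕ)+1 : ℝ) * θ := by push_cast; ring
      have harg2 : ((m:ℝ)+1) * θ - θ = ((m:ℕ) : ℝ) * θ := by push_cast; ring
      rw [harg1, harg2, hNθ] at key2
      apply mul_left_cancel₀ hsin
      rw [mul_zero, mul_comm]
      rw [hlamθ, hP]
      simp only [eval_sub, eval_mul, eval_one, eval_X]
      push_cast at e1 e0 key2 hNθ ⊢
      rw [show ((m:ℝ) + 1 + 1) = ((m:ℝ) + 2) from by ring] at hNθ e1
      linear_combination (2*Real.cos θ - 1) * e1 - e0 + (2*Real.cos θ - 1) * hNθ - key2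
  have hinj : Function.Injective (fun k : Fin N => lam k) := by
    intro j k h
    simp only [hlam] at h
    have hπ := Real.pi_pos
    have hNpos : (0:ℝ) < N := by positivity
    have hcos : Real.cos (j * Real.pi / N) = Real.cos (k * Real.pi / N) := by linarith
    have hmem : ∀ l : Fin N, (l : ℝ) * Real.pi / N ∈ Set.Icc 0 Real.pi := by
      intro l
      constructor
      · positivity
      · rw [div_le_iff₀ hNpos]
        have hl : (l:ℝ) + 1 ≤ (N:ℝ) := by exact_mod_cast l.isLt
        nlinarith
    have := Real.injOn_cos (hmem j) (hmem k) hcos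
    rw [div_left_inj' hNpos.ne', mul_left_inj' hπ.ne'] at this
    exact Fin.ext (by exact_mod_cast this)
  have hQeval : ∀ k : Fin N, Q.eval (lam k) = 0 := by
    intro k
    rw [hQ, eval_sub, eval_mul, eval_C, hPeval k k.isLt, hr, eval_prod]
    rw [Finset.prod_eq_zero (Finset.mem_range.mpr k.isLt) (by simp)]
    ring
  have hQ0 : Q = 0 := by
    refine Polynomial.eq_zero_of_natDegree_lt_card_of_eval_eq_zero Q hinj hQeval ?_
    simpa using hQlt
  have heq := sub_eq_zero.mp hQ0
  rw [hP] at heq ⊢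
  rw [heq, hr]
  have hcast : ((N:ℕ):ℝ) = (m:ℝ) + 2 := by rw [hNdef]; push_cast; ring
  congr 1
  refine Finset.prod_congr rfl fun k _ => ?_
  rw [hlam]
  simp only [hcast]

theorem stmt2 (N : ℕ) (hN : 2 ≤ N) (a : ℝ) :
    Matrix.det (chainA N - a • (1 : Matrix (Fin N) (Fin N) ℝ)) =
      (-1) ^ N * ∏ i ∈ Finset.range N, (a - 2 * (1 - Real.cos (i * Real.pi / N))) := by
  obtain ⟨m, rfl⟩ : ∃ m, N = m + 2 := ⟨N - 2, by omega⟩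
  rw [det_chain, qp_poly_eq]
  simp only [Polynomial.eval_mul, Polynomial.eval_C, Polynomial.eval_prod, Polynomial.eval_sub,
    Polynomial.eval_X]
  congr 1
  refine Finset.prod_congr rfl fun k _ => ?_
  push_cast
  ring
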